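/- Let G be a type 4 subdivision of K_4 (exactly four of the six edges properly subdivided, the two non-subdivided edges sharing an endpoint x, and the subdivision satisfying the Burling condition). Then x is the unique vertex that is the center of a star cutset in G. -/

import Mathlib

namespace BurlingFormal

open SimpleGraph

/-- An orientation of a simple graph, given as a relation choosing a direction for each edge. -/
def IsOrientation {V : Type} (G : SimpleGraph V) (A : V → V → Prop) : Prop :=
  (∀ u v, A u v → G.Adj u v) ∧ (∀ u v, G.Adj u v → (A u v ↔ ¬ A v u))

/-- A chordless cycle: a cycle such that every adjacency between its vertices is a cycle edge. -/
def IsChordlessCycle {V : Type} (G : SimpleGraph V) {v : V} (c : G.Walk v v) : Prop :=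
  c.IsCycle ∧ ∀ x y, x ∈ c.support → y ∈ c.support → G.Adj x y → s(x, y) ∈ c.edges

/-- A hole: a chordless cycle of length at least 4. -/
def IsHole {V : Type} (G : SimpleGraph V) {v : V} (c : G.Walk v v) : Prop :=
  IsChordlessCycle G c ∧ 4 ≤ c.length

/-- A source of a hole w.r.t. an orientation: both its neighbours on the hole are out-neighbours. -/
def IsHoleSource {V : Type} {G : SimpleGraph V} {v : V} (A : V → V → Prop)
    (c : G.Walk v v) (x : V) : Prop :=
  x ∈ c.support ∧ ∀ y, s(x, y) ∈ c.edges → A x y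

/-- A sink of a hole w.r.t. an orientation: both its neighbours on the hole are in-neighbours. -/
def IsHoleSink {V : Type} {G : SimpleGraph V} {v : V} (A : V → V → Prop)
    (c : G.Walk v v) (x : V) : Prop :=
  x ∈ c.support ∧ ∀ y, s(x, y) ∈ c.edges → A y x

/-- An extremum of a hole: a source or a sink of it. -/
def IsHoleExtremum {V : Type} {G : SimpleGraph V} {v : V} (A : V → V → Prop)
    (c : G.Walk v v) (x : V) : Prop :=
  IsHoleSource A c x ∨ IsHoleSink A c x

/-- The hole has exactly two sources and exactly two sinks. -/
def TwoSourcesTwoSinks {V : Type} {G : SimpleGraph V} {v : V} (A : V → V → Prop)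
    (c : G.Walk v v) : Prop :=
  (∃ s₁ s₂, s₁ ≠ s₂ ∧ IsHoleSource A c s₁ ∧ IsHoleSource A c s₂ ∧
    ∀ s, IsHoleSource A c s → s = s₁ ∨ s = s₂) ∧
  (∃ t₁ t₂, t₁ ≠ t₂ ∧ IsHoleSink A c t₁ ∧ IsHoleSink A c t₂ ∧
    ∀ t, IsHoleSink A c t → t = t₁ ∨ t = t₂)

/-- The pivot of a hole: a sink adjacent on the hole to all of its sources. -/
def IsHolePivot {V : Type} {G : SimpleGraph V} {v : V} (A : V → V → Prop)
    (c : G.Walk v v) (x : V) : Prop :=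
  IsHoleSink A c x ∧ ∀ y, IsHoleSource A c y → s(x, y) ∈ c.edges

/-- A subordinate vertex of a hole: neither an antenna (source) nor the pivot. -/
def IsHoleSubordinate {V : Type} {G : SimpleGraph V} {v : V} (A : V → V → Prop)
    (c : G.Walk v v) (x : V) : Prop :=
  x ∈ c.support ∧ ¬ IsHoleSource A c x ∧ ¬ IsHolePivot A c x

/-- `S` is the vertex set of a (possibly empty) branch (downward path) starting at `u`
in the rooted tree given by the parent function. -/
def IsBranchFrom {V : Type} (parent : V → V) (u : V) (S : Set V) : Prop :=
  S = ∅ ∨ (u ∈ S ∧ (∀ w ∈ S, w ≠ u → parent w ∈ S ∧ parent w ≠ w) ∧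
    ∀ w ∈ S, ∀ w' ∈ S, w ≠ u → w' ≠ u → parent w = parent w' → w = w')

/-- A Burling tree: a rooted tree (given by a parent function) together with a last-born
function and a choose function assigning to each non-last-born non-root vertex the vertex set
of a branch starting at the last-born of its parent. -/
structure BurlingTree (V : Type) where
  parent : V → V
  root : V
  parent_root : parent root = root
  reach : ∀ v, ∃ n, parent^[n] v = root
  lastBorn : V → V
  lastBorn_child : ∀ v, (∃ u, u ≠ v ∧ parent u = v) → parent (lastBorn v) = v ∧ lastBorn v ≠ v
  choosePath : V → Set V
  choosePath_empty : ∀ v, v = root ∨ v = lastBorn (parent v) → choosePath v = ∅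
  choosePath_branch : ∀ v, v ≠ root → v ≠ lastBorn (parent v) →
    IsBranchFrom parent (lastBorn (parent v)) (choosePath v)

/-- The arcs of the oriented graph fully derived from a Burling tree. -/
def BurlingTree.Arc {V : Type} (T : BurlingTree V) (u v : V) : Prop :=
  v ∈ T.choosePath u

/-- `A` orients `G` so that `G` with this orientation is an oriented graph derived from
some Burling tree (an oriented Burling graph). -/
def IsOrientedBurling {W : Type} (G : SimpleGraph W) (A : W → W → Prop) : Prop :=
  IsOrientation G A ∧
    ∃ (V : Type) (T : BurlingTree V) (f : W ↪ V), ∀ u v, A u v ↔ T.Arc (f u) (f v)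

/-- A Burling graph (equivalently, a derived graph): the underlying graph of an oriented
graph derived from a Burling tree. -/
def IsBurlingGraph {W : Type} (G : SimpleGraph W) : Prop :=
  ∃ A, IsOrientedBurling G A

/-- A global subordinate vertex of a Burling graph: subordinate in some hole, for every
orientation of the graph as an oriented Burling graph. -/
def IsGlobalSubordinate {W : Type} (G : SimpleGraph W) (x : W) : Prop :=
  ∀ A, IsOrientedBurling G A →
    ∃ (v : W) (c : G.Walk v v), IsHole G c ∧ IsHoleSubordinate A c x

/-- `H` is a subdivision of `G` via the branch-vertex embedding `f` and the system of
paths `P` replacing the edges of `G`. -/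
def IsSubdivisionVia {V W : Type} (H : SimpleGraph W) (G : SimpleGraph V) (f : V ↪ W)
    (P : ∀ ⦃u v : V⦄, G.Adj u v → H.Walk (f u) (f v)) : Prop :=
  (∀ ⦃u v⦄ (h : G.Adj u v), (P h).IsPath ∧ 1 ≤ (P h).length) ∧
  (∀ ⦃u v⦄ (h : G.Adj u v) (x : V), f x ∈ (P h).support → x = u ∨ x = v) ∧
  (∀ ⦃u v u' v'⦄ (h : G.Adj u v) (h' : G.Adj u' v'), s(u, v) ≠ s(u', v') →
    ∀ w, w ∈ (P h).support → w ∈ (P h').support → ∃ x : V, w = f x) ∧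
  (∀ w : W, ∃ u v, ∃ h : G.Adj u v, w ∈ (P h).support) ∧
  (∀ ⦃x y : W⦄, H.Adj x y → ∃ u v, ∃ h : G.Adj u v, s(x, y) ∈ (P h).edges)

/-- `H` is a subdivision of `G`. -/
def IsSubdivision {V W : Type} (H : SimpleGraph W) (G : SimpleGraph V) : Prop :=
  ∃ (f : V ↪ W) (P : ∀ ⦃u v : V⦄, G.Adj u v → H.Walk (f u) (f v)), IsSubdivisionVia H G f P

/-- `G` contains an induced copy of `H`. -/
def InducedCopy {V W : Type} (H : SimpleGraph W) (G : SimpleGraph V) : Prop :=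
  ∃ f : W ↪ V, ∀ a b, H.Adj a b ↔ G.Adj (f a) (f b)

/-- The clique number of a graph. -/
noncomputable def cliqueNumber {V : Type} (G : SimpleGraph V) : ℕ :=
  sSup {n | ∃ s : Finset V, G.IsNClique n s}

/-- `G` belongs to `Forb*(H)`: it has no induced subdivision of `H`. -/
def InForbs {VH V : Type} (H : SimpleGraph VH) (G : SimpleGraph V) : Prop :=
  ∀ (U : Type) (S : SimpleGraph U), IsSubdivision S H → ¬ InducedCopy S G

/-- `H` is weakly pervasive: the class `Forb*(H)` (of finite graphs) is χ-bounded. -/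
def WeaklyPervasive {VH : Type} (H : SimpleGraph VH) : Prop :=
  ∃ f : ℕ → ℕ, ∀ (V : Type) (_ : Fintype V) (G : SimpleGraph V),
    InForbs H G → G.chromaticNumber ≤ (f (cliqueNumber G) : ℕ∞)

/-- `G` has a star cutset centered at `v`. -/
def HasStarCutsetAt {V : Type} (G : SimpleGraph V) (v : V) : Prop :=
  ∃ S : Set V, v ∈ S ∧ (∀ u ∈ S, u = v ∨ G.Adj v u) ∧ ¬ (G.induce Sᶜ).Preconnected

/-- `G` has a star cutset. -/
def HasStarCutset {V : Type} (G : SimpleGraph V) : Prop :=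
  ∃ v, HasStarCutsetAt G v

/-- The structure of an `m`-necklace on the graph `G`: beads `B i` (chordless cycles of
length at least 4 through the non-adjacent vertices `a i`, `b i`) joined cyclically by
paths `P i` from `b i` to `a (i+1)` (of length possibly 0, i.e. identification),
with no further vertices or edges. -/
structure Necklace {V : Type} (G : SimpleGraph V) (m : ℕ) where
  a : ZMod m → V
  b : ZMod m → V
  B : ∀ i, G.Walk (a i) (a i)
  P : ∀ i, G.Walk (b i) (a (i + 1))
  B_cycle : ∀ i, (B i).IsCycle
  B_len : ∀ i, 4 ≤ (B i).length
  b_mem : ∀ i, b i ∈ (B i).support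
  ab_ne : ∀ i, a i ≠ b i
  ab_nonadj : ∀ i, ¬ G.Adj (a i) (b i)
  P_path : ∀ i, (P i).IsPath
  bead_disjoint : ∀ i j, i ≠ j → ∀ x, x ∈ (B i).support → x ∈ (B j).support →
    (j = i + 1 ∧ x = b i ∧ x = a j) ∨ (i = j + 1 ∧ x = b j ∧ x = a i)
  path_bead_disjoint : ∀ i j (x : V), x ∈ (P i).support → x ∈ (B j).support →
    x = b i ∨ x = a (i + 1)
  path_disjoint : ∀ i j, i ≠ j → ∀ x, x ∈ (P i).support → x ∈ (P j).support →
    (x = b i ∨ x = a (i + 1)) ∧ (x = b j ∨ x = a (j + 1))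
  cover_vertex : ∀ x : V, (∃ i, x ∈ (B i).support) ∨ ∃ i, x ∈ (P i).support
  cover_edge : ∀ x y, G.Adj x y → (∃ i, s(x, y) ∈ (B i).edges) ∨ ∃ i, s(x, y) ∈ (P i).edges

/-- The bead `B i` of a necklace is short if `a i` and `b i` have a common neighbour. -/
def Necklace.Short {V : Type} {G : SimpleGraph V} {m : ℕ} (N : Necklace G m)
    (i : ZMod m) : Prop :=
  ∃ w, G.Adj (N.a i) w ∧ G.Adj (N.b i) w

/-- A chandelier: an in-tree (given by a parent function on `V \ {hub}`) with at least two
leaves, together with an extra vertex `hub` joined to all the leaves. -/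
structure Chandelier (V : Type) where
  hub : V
  root : V
  parent : V → V
  hub_ne_root : hub ≠ root
  parent_root : parent root = root
  parent_hub : parent hub = hub
  parent_ne_hub : ∀ u, u ≠ hub → parent u ≠ hub
  reach : ∀ u, u ≠ hub → ∃ n, parent^[n] u = root
  two_leaves : ∃ l₁ l₂ : V, l₁ ≠ l₂ ∧
    (l₁ ≠ hub ∧ l₁ ≠ root ∧ ∀ w, parent w = l₁ → w = l₁) ∧
    (l₂ ≠ hub ∧ l₂ ≠ root ∧ ∀ w, parent w = l₂ → w = l₂)

/-- A leaf of the in-tree of a chandelier. -/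
def Chandelier.IsLeaf {V : Type} (C : Chandelier V) (u : V) : Prop :=
  u ≠ C.hub ∧ u ≠ C.root ∧ ∀ w, C.parent w = u → w = u

/-- The arcs of (the oriented version of) a chandelier. -/
def Chandelier.Arc {V : Type} (C : Chandelier V) (u w : V) : Prop :=
  (u ≠ C.hub ∧ u ≠ C.root ∧ w = C.parent u) ∨ (C.IsLeaf u ∧ w = C.hub)

/-- The underlying (non-oriented) graph of a chandelier. -/
def Chandelier.graph {V : Type} (C : Chandelier V) : SimpleGraph V :=
  SimpleGraph.fromRel C.Arc

/-- There is a vertex lying on every cycle of the graph. -/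
def HasUniversalCycleVertex {V : Type} (G : SimpleGraph V) : Prop :=
  ∃ x : V, ∀ (w : V) (c : G.Walk w w), c.IsCycle → x ∈ c.support

/-- A Burling-admissible type-4 subdivision of `K₄` sitting inside `G`: branch vertices
`x, y, z, w`, where the two non-subdivided edges `xy`, `xz` share the endpoint `x`, and the
four other edges are replaced by internally disjoint paths of length at least 2. -/
structure Type4K4Core {V : Type} (G : SimpleGraph V) where
  x : V
  y : V
  z : V
  w : V
  ne_xy : x ≠ y
  ne_xz : x ≠ z
  ne_xw : x ≠ w
  ne_yz : y ≠ z
  ne_yw : y ≠ w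
  ne_zw : z ≠ w
  adj_xy : G.Adj x y
  adj_xz : G.Adj x z
  Pxw : G.Walk x w
  Pyz : G.Walk y z
  Pyw : G.Walk y w
  Pzw : G.Walk z w
  Pxw_path : Pxw.IsPath
  Pyz_path : Pyz.IsPath
  Pyw_path : Pyw.IsPath
  Pzw_path : Pzw.IsPath
  Pxw_len : 2 ≤ Pxw.length
  Pyz_len : 2 ≤ Pyz.length
  Pyw_len : 2 ≤ Pyw.length
  Pzw_len : 2 ≤ Pzw.length
  d₁ : ∀ v, v ∈ Pxw.support → v ∈ Pyz.support → False
  d₂ : ∀ v, v ∈ Pxw.support → v ∈ Pyw.support → v = w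
  d₃ : ∀ v, v ∈ Pxw.support → v ∈ Pzw.support → v = w
  d₄ : ∀ v, v ∈ Pyz.support → v ∈ Pyw.support → v = y
  d₅ : ∀ v, v ∈ Pyz.support → v ∈ Pzw.support → v = z
  d₆ : ∀ v, v ∈ Pyw.support → v ∈ Pzw.support → v = w

/-- The vertex set of a type-4 `K₄`-subdivision configuration. -/
def Type4K4Core.supp {V : Type} {G : SimpleGraph V} (c : Type4K4Core G) : Set V :=
  {v | v ∈ c.Pxw.support ∨ v ∈ c.Pyz.support ∨ v ∈ c.Pyw.support ∨ v ∈ c.Pzw.support}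

/-- The edge set of a type-4 `K₄`-subdivision configuration. -/
def Type4K4Core.edges {V : Type} {G : SimpleGraph V} (c : Type4K4Core G) : Set (Sym2 V) :=
  {e | e ∈ c.Pxw.edges ∨ e ∈ c.Pyz.edges ∨ e ∈ c.Pyw.edges ∨ e ∈ c.Pzw.edges ∨
    e = s(c.x, c.y) ∨ e = s(c.x, c.z)}

/-- The configuration exhausts the whole graph `G`. -/
def Type4K4Core.Spanning {V : Type} {G : SimpleGraph V} (c : Type4K4Core G) : Prop :=
  (∀ v : V, v ∈ c.supp) ∧ ∀ u v, G.Adj u v → s(u, v) ∈ c.edges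

/-- A vertex of degree exactly 2. -/
def DegTwo {V : Type} (G : SimpleGraph V) (x : V) : Prop :=
  ∃ p q, p ≠ q ∧ G.Adj x p ∧ G.Adj x q ∧ ∀ r, G.Adj x r → r = p ∨ r = q



open Walk

section Proof
variable {V : Type} [DecidableEq V] {G : SimpleGraph V}

section Helpers

/-- transfer a G-walk with support in s to reachability in the induced graph -/
lemma reachable_induce_of_walk {s : Set V} : ∀ {u t : V} (p : G.Walk u t)
    (hp : ∀ z ∈ p.support, z ∈ s),
    (G.induce s).Reachable ⟨u, hp u p.start_mem_support⟩ ⟨t, hp t p.end_mem_support⟩ := by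
  intro u t p
  induction p with
  | nil => intro hp; rfl
  | cons h q ih =>
    intro hp
    have h1 : ∀ z ∈ q.support, z ∈ s := fun z hz => hp z (by simp [hz])
    refine Reachable.trans (Adj.reachable ?_) (ih h1)
    exact h

lemma mem_take_drop {u a b : V} {p : G.Walk a b} (hp : p.IsPath) (h : u ∈ p.support)
    {z : V} (h1 : z ∈ (p.takeUntil u h).support) (h2 : z ∈ (p.dropUntil u h).support) :
    z = u := by
  have hnd := hp.support_nodup
  rw [← take_spec p h] at hnd
  rw [support_append] at hnd
  have h2' := h2
  rw [(p.dropUntil u h).support_eq_cons] at h2'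
  rcases List.mem_cons.mp h2' with h3 | h3
  · exact h3
  · exact absurd h1 (fun hc => (List.disjoint_of_nodup_append hnd) hc h3)

lemma end_not_mem_take {u a b : V} {p : G.Walk a b} (hp : p.IsPath) (h : u ∈ p.support)
    (hub : u ≠ b) : b ∉ (p.takeUntil u h).support := fun hc =>
  hub.symm (mem_take_drop hp h hc (p.dropUntil u h).end_mem_support)

lemma start_not_mem_drop {u a b : V} {p : G.Walk a b} (hp : p.IsPath) (h : u ∈ p.support)
    (hua : u ≠ a) : a ∉ (p.dropUntil u h).support := fun hc =>
  hua.symm (mem_take_drop hp h (p.takeUntil u h).start_mem_support hc)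

omit [DecidableEq V] in
/-- view a nontrivial path as a cons -/
lemma cons_view {a b : V} (p : G.Walk a b) (hp : p.IsPath) (hab : a ≠ b) :
    ∃ (r : V) (h : G.Adj a r) (q : G.Walk r b),
      p = Walk.cons h q ∧ a ∉ q.support ∧ q.IsPath := by
  cases p with
  | nil => exact absurd rfl hab
  | cons h q =>
    rw [Walk.cons_isPath_iff] at hp
    exact ⟨_, h, q, rfl, hp.2, hp.1⟩

omit [DecidableEq V] in
lemma edge_of_cons {a r b z : V} {h : G.Adj a r} {q : G.Walk r b}
    (hq : a ∉ q.support) (he : s(a, z) ∈ (Walk.cons h q).edges) : z = r := by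
  rw [Walk.edges_cons] at he
  rcases List.mem_cons.mp he with he | he
  · rcases Sym2.eq_iff.mp he with ⟨_, h2⟩ | ⟨h1, h2⟩
    · exact h2
    · exact absurd h1 h.ne
  · exact absurd (q.fst_mem_support_of_mem_edges he) hq

omit [DecidableEq V] in
/-- decompose a path at its final vertex -/
lemma endpoint_split {a b : V} (Q : G.Walk a b) (hQ : Q.IsPath) (hab : a ≠ b) :
    ∃ (q₁ : V) (D : G.Walk q₁ a), G.Adj b q₁ ∧ D.IsPath ∧
      (∀ t, s(b, t) ∈ Q.edges → t = q₁) ∧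
      (∀ z, z ∈ D.support → z ∈ Q.support) ∧ b ∉ D.support ∧
      (∀ u, u ∈ Q.support → u ≠ b → u ∈ D.support) ∧
      (2 ≤ Q.length → q₁ ≠ a) := by
  obtain ⟨r, hr, q, hq, hbq, hqp⟩ := cons_view Q.reverse hQ.reverse hab.symm
  refine ⟨r, q, hr, hqp, ?_, ?_, hbq, ?_, ?_⟩
  · intro t ht
    have ht' : s(b, t) ∈ Q.reverse.edges := by
      rw [Walk.edges_reverse, List.mem_reverse]; exact ht
    rw [hq] at ht'
    exact edge_of_cons hbq ht'
  · intro z hz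
    have : z ∈ Q.reverse.support := by rw [hq]; simp [hz]
    rwa [Walk.support_reverse, List.mem_reverse] at this
  · intro u hu hub
    have : u ∈ Q.reverse.support := by rwa [Walk.support_reverse, List.mem_reverse]
    rw [hq, Walk.support_cons] at this
    rcases List.mem_cons.mp this with h | h
    · exact absurd h hub
    · exact h
  · intro hlen hra
    subst hra
    have : q = Walk.nil := Walk.isPath_iff_eq_nil.mp hqp
    have hlq : Q.reverse.length = 1 := by rw [hq, this]; simp
    rw [Walk.length_reverse] at hlq
    omega

/-- decompose a path at an interior vertex -/
lemma interior_split {a b v : V} (Q : G.Walk a b) (hQ : Q.IsPath) (hv : v ∈ Q.support)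
    (hva : v ≠ a) (hvb : v ≠ b) :
    ∃ (p₁ p₂ : V) (A₂ : G.Walk p₁ a) (B₂ : G.Walk p₂ b),
      G.Adj v p₁ ∧ G.Adj v p₂ ∧ A₂.IsPath ∧ B₂.IsPath ∧
      (∀ t, s(v, t) ∈ Q.edges → t = p₁ ∨ t = p₂) ∧
      (∀ z, z ∈ A₂.support → z ∈ Q.support) ∧ (∀ z, z ∈ B₂.support → z ∈ Q.support) ∧
      v ∉ A₂.support ∧ v ∉ B₂.support ∧
      p₂ ∉ A₂.support ∧ p₁ ∉ B₂.support ∧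
      a ∉ B₂.support ∧ b ∉ A₂.support ∧
      (∀ u, u ∈ Q.support → u ≠ v → u ∈ A₂.support ∨ u ∈ B₂.support) := by
  set A := Q.takeUntil v hv with hA
  set B := Q.dropUntil v hv with hB
  have hAp : A.IsPath := hQ.takeUntil hv
  have hBp : B.IsPath := hQ.dropUntil hv
  obtain ⟨p₁, hp₁, A₂, hA₂eq, hvA₂, hA₂p⟩ := cons_view A.reverse hAp.reverse hva
  obtain ⟨p₂, hp₂, B₂, hB₂eq, hvB₂, hB₂p⟩ := cons_view B hBp hvb
  have hA₂sub : ∀ z, z ∈ A₂.support → z ∈ A.support := by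
    intro z hz
    have : z ∈ A.reverse.support := by rw [hA₂eq]; simp [hz]
    rwa [Walk.support_reverse, List.mem_reverse] at this
  have hB₂sub : ∀ z, z ∈ B₂.support → z ∈ B.support := by
    intro z hz; rw [hB₂eq]; simp [hz]
  have hAsub : ∀ z, z ∈ A.support → z ∈ Q.support := fun z hz => Q.support_takeUntil_subset hv hz
  have hBsub : ∀ z, z ∈ B.support → z ∈ Q.support := fun z hz => Q.support_dropUntil_subset hv hz
  refine ⟨p₁, p₂, A₂, B₂, hp₁, hp₂, hA₂p, hB₂p, ?_, fun z hz => hAsub z (hA₂sub z hz),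
    fun z hz => hBsub z (hB₂sub z hz), hvA₂, hvB₂, ?_, ?_, ?_, ?_, ?_⟩
  · intro t ht
    rw [← take_spec Q hv] at ht
    rw [← hA, ← hB] at ht
    rw [Walk.edges_append, List.mem_append] at ht
    rcases ht with ht | ht
    · left
      have ht' : s(v, t) ∈ A.reverse.edges := by
        rw [Walk.edges_reverse, List.mem_reverse]; exact ht
      rw [hA₂eq] at ht'
      exact edge_of_cons hvA₂ ht'
    · right
      rw [hB₂eq] at ht
      exact edge_of_cons hvB₂ ht
  · intro hmem
    have h1 : p₂ ∈ A.support := hA₂sub _ hmem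
    have h2 : p₂ ∈ B.support := hB₂sub _ B₂.start_mem_support
    exact hp₂.ne (mem_take_drop hQ hv h1 h2).symm
  · intro hmem
    have h1 : p₁ ∈ A.support := hA₂sub _ A₂.start_mem_support
    have h2 : p₁ ∈ B.support := hB₂sub _ hmem
    exact hp₁.ne (mem_take_drop hQ hv h1 h2).symm
  · intro hmem
    exact hva (mem_take_drop hQ hv A.start_mem_support (hB₂sub _ hmem)).symm
  · intro hmem
    exact hvb (mem_take_drop hQ hv (hA₂sub _ hmem) B.end_mem_support).symm
  · intro u hu huv
    rw [← take_spec Q hv] at hu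
    rw [← hA, ← hB] at hu
    rw [Walk.mem_support_append_iff] at hu
    rcases hu with hu | hu
    · left
      have : u ∈ A.reverse.support := by rwa [Walk.support_reverse, List.mem_reverse]
      rw [hA₂eq, Walk.support_cons] at this
      rcases List.mem_cons.mp this with h | h
      · exact absurd h huv
      · exact h
    · right
      rw [hB₂eq, Walk.support_cons] at hu
      rcases List.mem_cons.mp hu with h | h
      · exact absurd h huv
      · exact h

omit [DecidableEq V] in
lemma loop_support {a u : V} {p : G.Walk a a} (hp : p.IsPath) (hu : u ∈ p.support) : u = a := by
  have h := Walk.isPath_iff_eq_nil.mp hp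
  subst h; simpa using hu

end Helpers

namespace Type4K4Core
variable {V : Type} [DecidableEq V] {G : SimpleGraph V} (c : Type4K4Core G) (hc : c.Spanning)

lemma x_nmem_yz : c.x ∉ c.Pyz.support := fun h => c.d₁ c.x c.Pxw.start_mem_support h
lemma x_nmem_yw : c.x ∉ c.Pyw.support := fun h => c.ne_xw (c.d₂ c.x c.Pxw.start_mem_support h)
lemma x_nmem_zw : c.x ∉ c.Pzw.support := fun h => c.ne_xw (c.d₃ c.x c.Pxw.start_mem_support h)
lemma y_nmem_xw : c.y ∉ c.Pxw.support := fun h => c.ne_yw (c.d₂ c.y h c.Pyw.start_mem_support)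
lemma y_nmem_zw : c.y ∉ c.Pzw.support := fun h => c.ne_yw (c.d₆ c.y c.Pyw.start_mem_support h)
lemma z_nmem_xw : c.z ∉ c.Pxw.support := fun h => c.ne_zw (c.d₃ c.z h c.Pzw.start_mem_support)
lemma z_nmem_yw : c.z ∉ c.Pyw.support := fun h => c.ne_zw (c.d₆ c.z h c.Pzw.start_mem_support)
lemma w_nmem_yz : c.w ∉ c.Pyz.support := fun h => c.d₁ c.w c.Pxw.end_mem_support h

include hc

lemma nbr_yz {u t : V} (hu : u ∈ c.Pyz.support) (huy : u ≠ c.y) (huz : u ≠ c.z)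
    (h : G.Adj u t) : s(u, t) ∈ c.Pyz.edges := by
  rcases hc.2 u t h with h1 | h1 | h1 | h1 | h1 | h1
  · exact (c.d₁ u (c.Pxw.fst_mem_support_of_mem_edges h1) hu).elim
  · exact h1
  · exact absurd (c.d₄ u hu (c.Pyw.fst_mem_support_of_mem_edges h1)) huy
  · exact absurd (c.d₅ u hu (c.Pzw.fst_mem_support_of_mem_edges h1)) huz
  · rcases Sym2.eq_iff.mp h1 with ⟨h2, _⟩ | ⟨h2, _⟩
    · exact absurd hu (h2 ▸ c.x_nmem_yz)
    · exact absurd h2 huy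
  · rcases Sym2.eq_iff.mp h1 with ⟨h2, _⟩ | ⟨h2, _⟩
    · exact absurd hu (h2 ▸ c.x_nmem_yz)
    · exact absurd h2 huz

lemma nbr_xw {u t : V} (hu : u ∈ c.Pxw.support) (hux : u ≠ c.x) (huw : u ≠ c.w)
    (h : G.Adj u t) : s(u, t) ∈ c.Pxw.edges := by
  rcases hc.2 u t h with h1 | h1 | h1 | h1 | h1 | h1
  · exact h1
  · exact (c.d₁ u hu (c.Pyz.fst_mem_support_of_mem_edges h1)).elim
  · exact absurd (c.d₂ u hu (c.Pyw.fst_mem_support_of_mem_edges h1)) huw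
  · exact absurd (c.d₃ u hu (c.Pzw.fst_mem_support_of_mem_edges h1)) huw
  · rcases Sym2.eq_iff.mp h1 with ⟨h2, _⟩ | ⟨h2, _⟩
    · exact absurd h2 hux
    · exact absurd hu (h2 ▸ c.y_nmem_xw)
  · rcases Sym2.eq_iff.mp h1 with ⟨h2, _⟩ | ⟨h2, _⟩
    · exact absurd h2 hux
    · exact absurd hu (h2 ▸ c.z_nmem_xw)

lemma nbr_yw {u t : V} (hu : u ∈ c.Pyw.support) (huy : u ≠ c.y) (huw : u ≠ c.w)
    (h : G.Adj u t) : s(u, t) ∈ c.Pyw.edges := by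
  rcases hc.2 u t h with h1 | h1 | h1 | h1 | h1 | h1
  · exact absurd (c.d₂ u (c.Pxw.fst_mem_support_of_mem_edges h1) hu) huw
  · exact absurd (c.d₄ u (c.Pyz.fst_mem_support_of_mem_edges h1) hu) huy
  · exact h1
  · exact absurd (c.d₆ u hu (c.Pzw.fst_mem_support_of_mem_edges h1)) huw
  · rcases Sym2.eq_iff.mp h1 with ⟨h2, _⟩ | ⟨h2, _⟩
    · exact absurd hu (h2 ▸ c.x_nmem_yw)
    · exact absurd h2 huy
  · rcases Sym2.eq_iff.mp h1 with ⟨h2, _⟩ | ⟨h2, _⟩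
    · exact absurd hu (h2 ▸ c.x_nmem_yw)
    · exact absurd hu (h2 ▸ c.z_nmem_yw)

lemma nbr_zw {u t : V} (hu : u ∈ c.Pzw.support) (huz : u ≠ c.z) (huw : u ≠ c.w)
    (h : G.Adj u t) : s(u, t) ∈ c.Pzw.edges := by
  rcases hc.2 u t h with h1 | h1 | h1 | h1 | h1 | h1
  · exact absurd (c.d₃ u (c.Pxw.fst_mem_support_of_mem_edges h1) hu) huw
  · exact absurd (c.d₅ u (c.Pyz.fst_mem_support_of_mem_edges h1) hu) huz
  · exact absurd (c.d₆ u (c.Pyw.fst_mem_support_of_mem_edges h1) hu) huw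
  · exact h1
  · rcases Sym2.eq_iff.mp h1 with ⟨h2, _⟩ | ⟨h2, _⟩
    · exact absurd hu (h2 ▸ c.x_nmem_zw)
    · exact absurd hu (h2 ▸ c.y_nmem_zw)
  · rcases Sym2.eq_iff.mp h1 with ⟨h2, _⟩ | ⟨h2, _⟩
    · exact absurd hu (h2 ▸ c.x_nmem_zw)
    · exact absurd h2 huz

lemma nbr_w {t : V} (h : G.Adj c.w t) :
    s(c.w, t) ∈ c.Pxw.edges ∨ s(c.w, t) ∈ c.Pyw.edges ∨ s(c.w, t) ∈ c.Pzw.edges := by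
  rcases hc.2 c.w t h with h1 | h1 | h1 | h1 | h1 | h1
  · exact Or.inl h1
  · exact (c.w_nmem_yz (c.Pyz.fst_mem_support_of_mem_edges h1)).elim
  · exact Or.inr (Or.inl h1)
  · exact Or.inr (Or.inr h1)
  · rcases Sym2.eq_iff.mp h1 with ⟨h2, _⟩ | ⟨h2, _⟩
    · exact absurd h2.symm c.ne_xw
    · exact absurd h2.symm c.ne_yw
  · rcases Sym2.eq_iff.mp h1 with ⟨h2, _⟩ | ⟨h2, _⟩
    · exact absurd h2.symm c.ne_xw
    · exact absurd h2.symm c.ne_zw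

lemma nbr_y {t : V} (h : G.Adj c.y t) :
    t = c.x ∨ s(c.y, t) ∈ c.Pyz.edges ∨ s(c.y, t) ∈ c.Pyw.edges := by
  rcases hc.2 c.y t h with h1 | h1 | h1 | h1 | h1 | h1
  · exact (c.y_nmem_xw (c.Pxw.fst_mem_support_of_mem_edges h1)).elim
  · exact Or.inr (Or.inl h1)
  · exact Or.inr (Or.inr h1)
  · exact (c.y_nmem_zw (c.Pzw.fst_mem_support_of_mem_edges h1)).elim
  · rcases Sym2.eq_iff.mp h1 with ⟨h2, _⟩ | ⟨_, h3⟩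
    · exact absurd h2.symm c.ne_xy
    · exact Or.inl h3
  · rcases Sym2.eq_iff.mp h1 with ⟨h2, _⟩ | ⟨h2, _⟩
    · exact absurd h2.symm c.ne_xy
    · exact absurd h2 c.ne_yz

lemma nbr_z {t : V} (h : G.Adj c.z t) :
    t = c.x ∨ s(c.z, t) ∈ c.Pyz.edges ∨ s(c.z, t) ∈ c.Pzw.edges := by
  rcases hc.2 c.z t h with h1 | h1 | h1 | h1 | h1 | h1
  · exact (c.z_nmem_xw (c.Pxw.fst_mem_support_of_mem_edges h1)).elim
  · exact Or.inr (Or.inl h1)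
  · exact (c.z_nmem_yw (c.Pyw.fst_mem_support_of_mem_edges h1)).elim
  · exact Or.inr (Or.inr h1)
  · rcases Sym2.eq_iff.mp h1 with ⟨h2, _⟩ | ⟨h2, _⟩
    · exact absurd h2.symm c.ne_xz
    · exact absurd h2.symm c.ne_yz
  · rcases Sym2.eq_iff.mp h1 with ⟨h2, _⟩ | ⟨_, h3⟩
    · exact absurd h2.symm c.ne_xz
    · exact Or.inl h3

lemma reach_all_y (S : Set V) (hvS : c.y ∈ S)
    (hSN : ∀ u ∈ S, u = c.y ∨ G.Adj c.y u) :
    ∃ (t : V) (htS : t ∈ Sᶜ), ∀ (u : V) (hu : u ∈ Sᶜ),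
      (G.induce Sᶜ).Reachable ⟨u, hu⟩ ⟨t, htS⟩ := by
  have hsupR : ∀ {a b : V} (p : G.Walk a b) (z : V),
      z ∈ p.reverse.support ↔ z ∈ p.support := by
    intro a b p z; rw [Walk.support_reverse, List.mem_reverse]
  have hedgR : ∀ {a b : V} (p : G.Walk a b) (e : Sym2 V),
      e ∈ p.reverse.edges ↔ e ∈ p.edges := by
    intro a b p e; rw [Walk.edges_reverse, List.mem_reverse]
  obtain ⟨r₁, D₁, hadj₁, hD₁p, hedge₁, hD₁sub, hyD₁, hcomp₁, hne₁⟩ :=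
    endpoint_split c.Pyz.reverse c.Pyz_path.reverse c.ne_yz.symm
  obtain ⟨r₂, D₂, hadj₂, hD₂p, hedge₂, hD₂sub, hyD₂, hcomp₂, hne₂⟩ :=
    endpoint_split c.Pyw.reverse c.Pyw_path.reverse c.ne_yw.symm
  have hr₁z : r₁ ≠ c.z := hne₁ (by rw [Walk.length_reverse]; exact c.Pyz_len)
  have hr₂w : r₂ ≠ c.w := hne₂ (by rw [Walk.length_reverse]; exact c.Pyw_len)
  have hD₁sub' : ∀ z ∈ D₁.support, z ∈ c.Pyz.support :=
    fun z hz => (hsupR c.Pyz z).mp (hD₁sub z hz)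
  have hD₂sub' : ∀ z ∈ D₂.support, z ∈ c.Pyw.support :=
    fun z hz => (hsupR c.Pyw z).mp (hD₂sub z hz)
  have hr₁yz : r₁ ∈ c.Pyz.support := hD₁sub' r₁ D₁.start_mem_support
  have hr₂yw : r₂ ∈ c.Pyw.support := hD₂sub' r₂ D₂.start_mem_support
  have hSsub : ∀ s ∈ S, s = c.y ∨ s = c.x ∨ s = r₁ ∨ s = r₂ := by
    intro s hs
    rcases hSN s hs with h | h
    · exact Or.inl h
    · rcases c.nbr_y hc h with h1 | h1 | h1
      · exact Or.inr (Or.inl h1)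
      · exact Or.inr (Or.inr (Or.inl (hedge₁ s ((hedgR c.Pyz _).mpr h1))))
      · exact Or.inr (Or.inr (Or.inr (hedge₂ s ((hedgR c.Pyw _).mpr h1))))
  have hSPzw : ∀ s ∈ S, s ∉ c.Pzw.support := by
    intro s hs hmem
    rcases hSsub s hs with rfl | rfl | rfl | rfl
    · exact c.y_nmem_zw hmem
    · exact c.x_nmem_zw hmem
    · exact hr₁z (c.d₅ _ hr₁yz hmem)
    · exact hr₂w (c.d₆ _ hr₂yw hmem)
  have hwS : c.w ∈ Sᶜ := fun hw => hSPzw c.w hw c.Pzw.end_mem_support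
  refine ⟨c.w, hwS, ?_⟩
  intro u hu
  rcases hc.1 u with h | h | h | h
  · -- u on Pxw
    have key : ∀ z ∈ (c.Pxw.dropUntil u h).support, z ∈ Sᶜ := by
      intro z hz hzS
      have hzPxw : z ∈ c.Pxw.support := c.Pxw.support_dropUntil_subset h hz
      rcases hSsub z hzS with rfl | rfl | rfl | rfl
      · exact c.y_nmem_xw hzPxw
      · by_cases hux : u = c.x
        · subst hux; exact hu hzS
        · exact start_not_mem_drop c.Pxw_path h hux hz
      · exact c.d₁ _ hzPxw hr₁yz
      · exact hr₂w (c.d₂ _ hzPxw hr₂yw)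
    exact reachable_induce_of_walk (c.Pxw.dropUntil u h) key
  · -- u on Pyz
    have huy : u ≠ c.y := fun h' => hu (h' ▸ hvS)
    have huD₁ : u ∈ D₁.support := hcomp₁ u ((hsupR c.Pyz u).mpr h) huy
    have key : ∀ z ∈ ((D₁.dropUntil u huD₁).append c.Pzw).support, z ∈ Sᶜ := by
      intro z hz hzS
      rw [Walk.mem_support_append_iff] at hz
      rcases hz with hz | hz
      · have hzD₁ : z ∈ D₁.support := D₁.support_dropUntil_subset huD₁ hz
        rcases hSsub z hzS with rfl | rfl | rfl | rfl
        · exact hyD₁ hzD₁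
        · exact c.x_nmem_yz (hD₁sub' _ hzD₁)
        · by_cases hur : u = z
          · subst hur; exact hu hzS
          · exact start_not_mem_drop hD₁p huD₁ hur hz
        · exact hyD₂ ((c.d₄ _ (hD₁sub' _ hzD₁) hr₂yw) ▸ D₂.start_mem_support)
      · exact hSPzw z hzS hz
    exact reachable_induce_of_walk ((D₁.dropUntil u huD₁).append c.Pzw) key
  · -- u on Pyw
    have huy : u ≠ c.y := fun h' => hu (h' ▸ hvS)
    have huD₂ : u ∈ D₂.support := hcomp₂ u ((hsupR c.Pyw u).mpr h) huy
    have key : ∀ z ∈ (D₂.dropUntil u huD₂).support, z ∈ Sᶜ := by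
      intro z hz hzS
      have hzD₂ : z ∈ D₂.support := D₂.support_dropUntil_subset huD₂ hz
      rcases hSsub z hzS with rfl | rfl | rfl | rfl
      · exact hyD₂ hzD₂
      · exact c.x_nmem_yw (hD₂sub' _ hzD₂)
      · exact hyD₁ ((c.d₄ _ hr₁yz (hD₂sub' _ hzD₂)) ▸ D₁.start_mem_support)
      · by_cases hur : u = z
        · subst hur; exact hu hzS
        · exact start_not_mem_drop hD₂p huD₂ hur hz
    exact reachable_induce_of_walk (D₂.dropUntil u huD₂) key
  · -- u on Pzw
    have key : ∀ z ∈ (c.Pzw.dropUntil u h).support, z ∈ Sᶜ := by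
      intro z hz hzS
      exact hSPzw z hzS (c.Pzw.support_dropUntil_subset h hz)
    exact reachable_induce_of_walk (c.Pzw.dropUntil u h) key

lemma reach_all_z (S : Set V) (hvS : c.z ∈ S)
    (hSN : ∀ u ∈ S, u = c.z ∨ G.Adj c.z u) :
    ∃ (t : V) (htS : t ∈ Sᶜ), ∀ (u : V) (hu : u ∈ Sᶜ),
      (G.induce Sᶜ).Reachable ⟨u, hu⟩ ⟨t, htS⟩ := by
  have hsupR : ∀ {a b : V} (p : G.Walk a b) (z : V),
      z ∈ p.reverse.support ↔ z ∈ p.support := by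
    intro a b p z; rw [Walk.support_reverse, List.mem_reverse]
  have hedgR : ∀ {a b : V} (p : G.Walk a b) (e : Sym2 V),
      e ∈ p.reverse.edges ↔ e ∈ p.edges := by
    intro a b p e; rw [Walk.edges_reverse, List.mem_reverse]
  obtain ⟨r₁, D₁, hadj₁, hD₁p, hedge₁, hD₁sub, hzD₁, hcomp₁, hne₁⟩ :=
    endpoint_split c.Pyz c.Pyz_path c.ne_yz
  obtain ⟨r₂, D₂, hadj₂, hD₂p, hedge₂, hD₂sub, hzD₂, hcomp₂, hne₂⟩ :=
    endpoint_split c.Pzw.reverse c.Pzw_path.reverse c.ne_zw.symm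
  have hr₁y : r₁ ≠ c.y := hne₁ c.Pyz_len
  have hr₂w : r₂ ≠ c.w := hne₂ (by rw [Walk.length_reverse]; exact c.Pzw_len)
  have hD₁sub' : ∀ z ∈ D₁.support, z ∈ c.Pyz.support := hD₁sub
  have hD₂sub' : ∀ z ∈ D₂.support, z ∈ c.Pzw.support :=
    fun z hz => (hsupR c.Pzw z).mp (hD₂sub z hz)
  have hr₁yz : r₁ ∈ c.Pyz.support := hD₁sub' r₁ D₁.start_mem_support
  have hr₂zw : r₂ ∈ c.Pzw.support := hD₂sub' r₂ D₂.start_mem_support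
  have hSsub : ∀ s ∈ S, s = c.z ∨ s = c.x ∨ s = r₁ ∨ s = r₂ := by
    intro s hs
    rcases hSN s hs with h | h
    · exact Or.inl h
    · rcases c.nbr_z hc h with h1 | h1 | h1
      · exact Or.inr (Or.inl h1)
      · exact Or.inr (Or.inr (Or.inl (hedge₁ s h1)))
      · exact Or.inr (Or.inr (Or.inr (hedge₂ s ((hedgR c.Pzw _).mpr h1))))
  have hSPyw : ∀ s ∈ S, s ∉ c.Pyw.support := by
    intro s hs hmem
    rcases hSsub s hs with rfl | rfl | rfl | rfl
    · exact c.z_nmem_yw hmem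
    · exact c.x_nmem_yw hmem
    · exact hr₁y (c.d₄ _ hr₁yz hmem)
    · exact hr₂w (c.d₆ _ hmem hr₂zw)
  have hwS : c.w ∈ Sᶜ := fun hw => hSPyw c.w hw c.Pyw.end_mem_support
  refine ⟨c.w, hwS, ?_⟩
  intro u hu
  rcases hc.1 u with h | h | h | h
  · -- u on Pxw
    have key : ∀ z ∈ (c.Pxw.dropUntil u h).support, z ∈ Sᶜ := by
      intro z hz hzS
      have hzPxw : z ∈ c.Pxw.support := c.Pxw.support_dropUntil_subset h hz
      rcases hSsub z hzS with rfl | rfl | rfl | rfl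
      · exact c.z_nmem_xw hzPxw
      · by_cases hux : u = c.x
        · subst hux; exact hu hzS
        · exact start_not_mem_drop c.Pxw_path h hux hz
      · exact c.d₁ _ hzPxw hr₁yz
      · exact hr₂w (c.d₃ _ hzPxw hr₂zw)
    exact reachable_induce_of_walk (c.Pxw.dropUntil u h) key
  · -- u on Pyz
    have huz : u ≠ c.z := fun h' => hu (h' ▸ hvS)
    have huD₁ : u ∈ D₁.support := hcomp₁ u h huz
    have key : ∀ z ∈ ((D₁.dropUntil u huD₁).append c.Pyw).support, z ∈ Sᶜ := by
      intro z hz hzS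
      rw [Walk.mem_support_append_iff] at hz
      rcases hz with hz | hz
      · have hzD₁m : z ∈ D₁.support := D₁.support_dropUntil_subset huD₁ hz
        rcases hSsub z hzS with rfl | rfl | rfl | rfl
        · exact hzD₁ hzD₁m
        · exact c.x_nmem_yz (hD₁sub' _ hzD₁m)
        · by_cases hur : u = z
          · subst hur; exact hu hzS
          · exact start_not_mem_drop hD₁p huD₁ hur hz
        · exact hzD₂ ((c.d₅ _ (hD₁sub' _ hzD₁m) hr₂zw) ▸ D₂.start_mem_support)
      · exact hSPyw z hzS hz
    exact reachable_induce_of_walk ((D₁.dropUntil u huD₁).append c.Pyw) key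
  · -- u on Pyw
    have key : ∀ z ∈ (c.Pyw.dropUntil u h).support, z ∈ Sᶜ := by
      intro z hz hzS
      exact hSPyw z hzS (c.Pyw.support_dropUntil_subset h hz)
    exact reachable_induce_of_walk (c.Pyw.dropUntil u h) key
  · -- u on Pzw
    have huz : u ≠ c.z := fun h' => hu (h' ▸ hvS)
    have huD₂ : u ∈ D₂.support := hcomp₂ u ((hsupR c.Pzw u).mpr h) huz
    have key : ∀ z ∈ (D₂.dropUntil u huD₂).support, z ∈ Sᶜ := by
      intro z hz hzS
      have hzD₂m : z ∈ D₂.support := D₂.support_dropUntil_subset huD₂ hz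
      rcases hSsub z hzS with rfl | rfl | rfl | rfl
      · exact hzD₂ hzD₂m
      · exact c.x_nmem_zw (hD₂sub' _ hzD₂m)
      · exact hzD₁ ((c.d₅ _ hr₁yz (hD₂sub' _ hzD₂m)) ▸ D₁.start_mem_support)
      · by_cases hur : u = z
        · subst hur; exact hu hzS
        · exact start_not_mem_drop hD₂p huD₂ hur hz
    exact reachable_induce_of_walk (D₂.dropUntil u huD₂) key

lemma reach_all_w (S : Set V) (hvS : c.w ∈ S)
    (hSN : ∀ u ∈ S, u = c.w ∨ G.Adj c.w u) :
    ∃ (t : V) (htS : t ∈ Sᶜ), ∀ (u : V) (hu : u ∈ Sᶜ),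
      (G.induce Sᶜ).Reachable ⟨u, hu⟩ ⟨t, htS⟩ := by
  obtain ⟨q₁, D₁, hadj₁, hD₁p, hedge₁, hD₁sub, hwD₁, hcomp₁, hne₁⟩ :=
    endpoint_split c.Pxw c.Pxw_path c.ne_xw
  obtain ⟨q₂, D₂, hadj₂, hD₂p, hedge₂, hD₂sub, hwD₂, hcomp₂, hne₂⟩ :=
    endpoint_split c.Pyw c.Pyw_path c.ne_yw
  obtain ⟨q₃, D₃, hadj₃, hD₃p, hedge₃, hD₃sub, hwD₃, hcomp₃, hne₃⟩ :=
    endpoint_split c.Pzw c.Pzw_path c.ne_zw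
  have hq₁x : q₁ ≠ c.x := hne₁ c.Pxw_len
  have hq₂y : q₂ ≠ c.y := hne₂ c.Pyw_len
  have hq₃z : q₃ ≠ c.z := hne₃ c.Pzw_len
  have hq₁xw : q₁ ∈ c.Pxw.support := hD₁sub q₁ D₁.start_mem_support
  have hq₂yw : q₂ ∈ c.Pyw.support := hD₂sub q₂ D₂.start_mem_support
  have hq₃zw : q₃ ∈ c.Pzw.support := hD₃sub q₃ D₃.start_mem_support
  have hSsub : ∀ s ∈ S, s = c.w ∨ s = q₁ ∨ s = q₂ ∨ s = q₃ := by
    intro s hs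
    rcases hSN s hs with h | h
    · exact Or.inl h
    · rcases c.nbr_w hc h with h1 | h1 | h1
      · exact Or.inr (Or.inl (hedge₁ s h1))
      · exact Or.inr (Or.inr (Or.inl (hedge₂ s h1)))
      · exact Or.inr (Or.inr (Or.inr (hedge₃ s h1)))
  have hSPyz : ∀ s ∈ S, s ∉ c.Pyz.support := by
    intro s hs hmem
    rcases hSsub s hs with rfl | rfl | rfl | rfl
    · exact c.w_nmem_yz hmem
    · exact c.d₁ _ hq₁xw hmem
    · exact hq₂y (c.d₄ _ hmem hq₂yw)
    · exact hq₃z (c.d₅ _ hmem hq₃zw)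
  have hxS : c.x ∈ Sᶜ := by
    intro hx
    rcases hSsub _ hx with h | h | h | h
    · exact c.ne_xw h
    · exact hq₁x h.symm
    · exact c.x_nmem_yw (h.symm ▸ hq₂yw)
    · exact c.x_nmem_zw (h.symm ▸ hq₃zw)
  have hyS : c.y ∈ Sᶜ := by
    intro hy
    rcases hSsub _ hy with h | h | h | h
    · exact c.ne_yw h
    · exact c.y_nmem_xw (h.symm ▸ hq₁xw)
    · exact hq₂y h.symm
    · exact c.y_nmem_zw (h.symm ▸ hq₃zw)
  have hzS : c.z ∈ Sᶜ := by
    intro hz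
    rcases hSsub _ hz with h | h | h | h
    · exact c.ne_zw h
    · exact c.z_nmem_xw (h.symm ▸ hq₁xw)
    · exact c.z_nmem_yw (h.symm ▸ hq₂yw)
    · exact hq₃z h.symm
  refine ⟨c.x, hxS, ?_⟩
  intro u hu
  rcases hc.1 u with h | h | h | h
  · -- u on Pxw
    have huw : u ≠ c.w := fun h' => hu (h' ▸ hvS)
    have huD₁ : u ∈ D₁.support := hcomp₁ u h huw
    have key : ∀ z ∈ (D₁.dropUntil u huD₁).support, z ∈ Sᶜ := by
      intro z hz hzSmem
      have hzm : z ∈ D₁.support := D₁.support_dropUntil_subset huD₁ hz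
      rcases hSsub z hzSmem with rfl | rfl | rfl | rfl
      · exact hwD₁ hzm
      · by_cases hur : u = z
        · subst hur; exact hu hzSmem
        · exact start_not_mem_drop hD₁p huD₁ hur hz
      · exact hwD₂ ((c.d₂ _ (hD₁sub _ hzm) hq₂yw) ▸ D₂.start_mem_support)
      · exact hwD₃ ((c.d₃ _ (hD₁sub _ hzm) hq₃zw) ▸ D₃.start_mem_support)
    exact reachable_induce_of_walk (D₁.dropUntil u huD₁) key
  · -- u on Pyz
    have key : ∀ z ∈ (((c.Pyz.takeUntil u h).reverse).append
        (Walk.cons c.adj_xy.symm Walk.nil)).support, z ∈ Sᶜ := by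
      intro z hz hzSmem
      rw [Walk.mem_support_append_iff] at hz
      rcases hz with hz | hz
      · rw [Walk.support_reverse, List.mem_reverse] at hz
        exact hSPyz z hzSmem (c.Pyz.support_takeUntil_subset h hz)
      · simp only [Walk.support_cons, Walk.support_nil, List.mem_cons] at hz
        rcases hz with rfl | hz
        · exact hyS hzSmem
        · rcases hz with rfl | hz
          · exact hxS hzSmem
          · simp at hz
    exact reachable_induce_of_walk _ key
  · -- u on Pyw
    have huw : u ≠ c.w := fun h' => hu (h' ▸ hvS)
    have huD₂ : u ∈ D₂.support := hcomp₂ u h huw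
    have key : ∀ z ∈ ((D₂.dropUntil u huD₂).append
        (Walk.cons c.adj_xy.symm Walk.nil)).support, z ∈ Sᶜ := by
      intro z hz hzSmem
      rw [Walk.mem_support_append_iff] at hz
      rcases hz with hz | hz
      · have hzm : z ∈ D₂.support := D₂.support_dropUntil_subset huD₂ hz
        rcases hSsub z hzSmem with rfl | rfl | rfl | rfl
        · exact hwD₂ hzm
        · exact hwD₁ ((c.d₂ _ hq₁xw (hD₂sub _ hzm)) ▸ D₁.start_mem_support)
        · by_cases hur : u = z
          · subst hur; exact hu hzSmem
          · exact start_not_mem_drop hD₂p huD₂ hur hz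
        · exact hwD₃ ((c.d₆ _ (hD₂sub _ hzm) hq₃zw) ▸ D₃.start_mem_support)
      · simp only [Walk.support_cons, Walk.support_nil, List.mem_cons] at hz
        rcases hz with rfl | hz
        · exact hyS hzSmem
        · rcases hz with rfl | hz
          · exact hxS hzSmem
          · simp at hz
    exact reachable_induce_of_walk _ key
  · -- u on Pzw
    have huw : u ≠ c.w := fun h' => hu (h' ▸ hvS)
    have huD₃ : u ∈ D₃.support := hcomp₃ u h huw
    have key : ∀ z ∈ ((D₃.dropUntil u huD₃).append
        (Walk.cons c.adj_xz.symm Walk.nil)).support, z ∈ Sᶜ := by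
      intro z hz hzSmem
      rw [Walk.mem_support_append_iff] at hz
      rcases hz with hz | hz
      · have hzm : z ∈ D₃.support := D₃.support_dropUntil_subset huD₃ hz
        rcases hSsub z hzSmem with rfl | rfl | rfl | rfl
        · exact hwD₃ hzm
        · exact hwD₁ ((c.d₃ _ hq₁xw (hD₃sub _ hzm)) ▸ D₁.start_mem_support)
        · exact hwD₂ ((c.d₆ _ hq₂yw (hD₃sub _ hzm)) ▸ D₂.start_mem_support)
        · by_cases hur : u = z
          · subst hur; exact hu hzSmem
          · exact start_not_mem_drop hD₃p huD₃ hur hz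
      · simp only [Walk.support_cons, Walk.support_nil, List.mem_cons] at hz
        rcases hz with rfl | hz
        · exact hzS hzSmem
        · rcases hz with rfl | hz
          · exact hxS hzSmem
          · simp at hz
    exact reachable_induce_of_walk _ key

lemma reach_all_int_yz (v : V) (hv : v ∈ c.Pyz.support) (hvy : v ≠ c.y) (hvz : v ≠ c.z)
    (S : Set V) (hvS : v ∈ S) (hSN : ∀ u ∈ S, u = v ∨ G.Adj v u) :
    ∃ (t : V) (htS : t ∈ Sᶜ), ∀ (u : V) (hu : u ∈ Sᶜ),
      (G.induce Sᶜ).Reachable ⟨u, hu⟩ ⟨t, htS⟩ := by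
  obtain ⟨p₁, p₂, A₂, B₂, hadj₁, hadj₂, hA₂p, hB₂p, hedge, hA₂sub, hB₂sub, hvA₂, hvB₂,
    hp₂A₂, hp₁B₂, haB₂, hbA₂, hcomp⟩ := interior_split c.Pyz c.Pyz_path hv hvy hvz
  have hSsub : ∀ s ∈ S, s = v ∨ s = p₁ ∨ s = p₂ := by
    intro s hs
    rcases hSN s hs with h | h
    · exact Or.inl h
    · rcases hedge s (c.nbr_yz hc hv hvy hvz h) with h1 | h1
      · exact Or.inr (Or.inl h1)
      · exact Or.inr (Or.inr h1)
  have hSmem : ∀ s ∈ S, s ∈ c.Pyz.support := by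
    intro s hs
    rcases hSsub s hs with rfl | rfl | rfl
    · exact hv
    · exact hA₂sub _ A₂.start_mem_support
    · exact hB₂sub _ B₂.start_mem_support
  have hxS : c.x ∈ Sᶜ := fun hx => c.x_nmem_yz (hSmem _ hx)
  refine ⟨c.x, hxS, ?_⟩
  intro u hu
  rcases hc.1 u with h | h | h | h
  · -- u on Pxw
    have key : ∀ z ∈ (c.Pxw.takeUntil u h).reverse.support, z ∈ Sᶜ := by
      intro z hz hzS
      rw [Walk.support_reverse, List.mem_reverse] at hz
      exact c.d₁ z (c.Pxw.support_takeUntil_subset h hz) (hSmem z hzS)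
    exact reachable_induce_of_walk _ key
  · -- u on Pyz
    have hune : u ≠ v := fun h' => hu (h' ▸ hvS)
    rcases hcomp u h hune with hm | hm
    · -- on the y-side
      have key : ∀ z ∈ ((A₂.dropUntil u hm).append
          (Walk.cons c.adj_xy.symm Walk.nil)).support, z ∈ Sᶜ := by
        intro z hz hzS
        rw [Walk.mem_support_append_iff] at hz
        rcases hz with hz | hz
        · have hzm : z ∈ A₂.support := A₂.support_dropUntil_subset hm hz
          rcases hSsub z hzS with rfl | rfl | rfl
          · exact hvA₂ hzm
          · by_cases hur : u = z
            · subst hur; exact hu hzS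
            · exact start_not_mem_drop hA₂p hm hur hz
          · exact hp₂A₂ hzm
        · simp only [Walk.support_cons, Walk.support_nil, List.mem_cons] at hz
          rcases hz with rfl | hz
          · -- z = y ∈ S : impossible
            rcases hSsub _ hzS with h1 | h1 | h1
            · exact hvy h1.symm
            · subst h1
              exact hu ((loop_support hA₂p hm).symm ▸ hzS)
            · exact haB₂ (h1.symm ▸ B₂.start_mem_support)
          · rcases hz with rfl | hz
            · exact hxS hzS
            · simp at hz
      exact reachable_induce_of_walk _ key
    · -- on the z-side
      have key : ∀ z ∈ ((B₂.dropUntil u hm).append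
          (Walk.cons c.adj_xz.symm Walk.nil)).support, z ∈ Sᶜ := by
        intro z hz hzS
        rw [Walk.mem_support_append_iff] at hz
        rcases hz with hz | hz
        · have hzm : z ∈ B₂.support := B₂.support_dropUntil_subset hm hz
          rcases hSsub z hzS with rfl | rfl | rfl
          · exact hvB₂ hzm
          · exact hp₁B₂ hzm
          · by_cases hur : u = z
            · subst hur; exact hu hzS
            · exact start_not_mem_drop hB₂p hm hur hz
        · simp only [Walk.support_cons, Walk.support_nil, List.mem_cons] at hz
          rcases hz with rfl | hz
          · rcases hSsub _ hzS with h1 | h1 | h1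
            · exact hvz h1.symm
            · exact hbA₂ (h1.symm ▸ A₂.start_mem_support)
            · subst h1
              exact hu ((loop_support hB₂p hm).symm ▸ hzS)
          · rcases hz with rfl | hz
            · exact hxS hzS
            · simp at hz
      exact reachable_induce_of_walk _ key
  · -- u on Pyw
    have key : ∀ z ∈ ((c.Pyw.dropUntil u h).append c.Pxw.reverse).support, z ∈ Sᶜ := by
      intro z hz hzS
      rw [Walk.mem_support_append_iff] at hz
      rcases hz with hz | hz
      · have hzy : z = c.y :=
          c.d₄ z (hSmem z hzS) (c.Pyw.support_dropUntil_subset h hz)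
        subst hzy
        by_cases huy : u = c.y
        · subst huy; exact hu hzS
        · exact start_not_mem_drop c.Pyw_path h huy hz
      · rw [Walk.support_reverse, List.mem_reverse] at hz
        exact c.d₁ z hz (hSmem z hzS)
    exact reachable_induce_of_walk _ key
  · -- u on Pzw
    have key : ∀ z ∈ ((c.Pzw.dropUntil u h).append c.Pxw.reverse).support, z ∈ Sᶜ := by
      intro z hz hzS
      rw [Walk.mem_support_append_iff] at hz
      rcases hz with hz | hz
      · have hzz : z = c.z :=
          c.d₅ z (hSmem z hzS) (c.Pzw.support_dropUntil_subset h hz)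
        subst hzz
        by_cases huz : u = c.z
        · subst huz; exact hu hzS
        · exact start_not_mem_drop c.Pzw_path h huz hz
      · rw [Walk.support_reverse, List.mem_reverse] at hz
        exact c.d₁ z hz (hSmem z hzS)
    exact reachable_induce_of_walk _ key

lemma reach_all_int_xw (v : V) (hv : v ∈ c.Pxw.support) (hvx : v ≠ c.x) (hvw : v ≠ c.w)
    (S : Set V) (hvS : v ∈ S) (hSN : ∀ u ∈ S, u = v ∨ G.Adj v u) :
    ∃ (t : V) (htS : t ∈ Sᶜ), ∀ (u : V) (hu : u ∈ Sᶜ),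
      (G.induce Sᶜ).Reachable ⟨u, hu⟩ ⟨t, htS⟩ := by
  obtain ⟨p₁, p₂, A₂, B₂, hadj₁, hadj₂, hA₂p, hB₂p, hedge, hA₂sub, hB₂sub, hvA₂, hvB₂,
    hp₂A₂, hp₁B₂, haB₂, hbA₂, hcomp⟩ := interior_split c.Pxw c.Pxw_path hv hvx hvw
  have hSsub : ∀ s ∈ S, s = v ∨ s = p₁ ∨ s = p₂ := by
    intro s hs
    rcases hSN s hs with h | h
    · exact Or.inl h
    · rcases hedge s (c.nbr_xw hc hv hvx hvw h) with h1 | h1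
      · exact Or.inr (Or.inl h1)
      · exact Or.inr (Or.inr h1)
  have hSmem : ∀ s ∈ S, s ∈ c.Pxw.support := by
    intro s hs
    rcases hSsub s hs with rfl | rfl | rfl
    · exact hv
    · exact hA₂sub _ A₂.start_mem_support
    · exact hB₂sub _ B₂.start_mem_support
  have hyS : c.y ∈ Sᶜ := fun hy => c.y_nmem_xw (hSmem _ hy)
  refine ⟨c.y, hyS, ?_⟩
  intro u hu
  rcases hc.1 u with h | h | h | h
  · -- u on Pxw
    have hune : u ≠ v := fun h' => hu (h' ▸ hvS)
    rcases hcomp u h hune with hm | hm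
    · -- x-side
      have key : ∀ z ∈ ((A₂.dropUntil u hm).append
          (Walk.cons c.adj_xy Walk.nil)).support, z ∈ Sᶜ := by
        intro z hz hzS
        rw [Walk.mem_support_append_iff] at hz
        rcases hz with hz | hz
        · have hzm : z ∈ A₂.support := A₂.support_dropUntil_subset hm hz
          rcases hSsub z hzS with rfl | rfl | rfl
          · exact hvA₂ hzm
          · by_cases hur : u = z
            · subst hur; exact hu hzS
            · exact start_not_mem_drop hA₂p hm hur hz
          · exact hp₂A₂ hzm
        · simp only [Walk.support_cons, Walk.support_nil, List.mem_cons] at hz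
          rcases hz with rfl | hz
          · rcases hSsub _ hzS with h1 | h1 | h1
            · exact hvx h1.symm
            · subst h1
              exact hu ((loop_support hA₂p hm).symm ▸ hzS)
            · exact haB₂ (h1.symm ▸ B₂.start_mem_support)
          · rcases hz with rfl | hz
            · exact hyS hzS
            · simp at hz
      exact reachable_induce_of_walk _ key
    · -- w-side
      have key : ∀ z ∈ ((B₂.dropUntil u hm).append c.Pyw.reverse).support, z ∈ Sᶜ := by
        intro z hz hzS
        rw [Walk.mem_support_append_iff] at hz
        rcases hz with hz | hz
        · have hzm : z ∈ B₂.support := B₂.support_dropUntil_subset hm hz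
          rcases hSsub z hzS with rfl | rfl | rfl
          · exact hvB₂ hzm
          · exact hp₁B₂ hzm
          · by_cases hur : u = z
            · subst hur; exact hu hzS
            · exact start_not_mem_drop hB₂p hm hur hz
        · rw [Walk.support_reverse, List.mem_reverse] at hz
          have hzw : z = c.w := c.d₂ z (hSmem z hzS) hz
          subst hzw
          rcases hSsub _ hzS with h1 | h1 | h1
          · exact hvw h1.symm
          · exact hbA₂ (h1.symm ▸ A₂.start_mem_support)
          · subst h1
            exact hu ((loop_support hB₂p hm).symm ▸ hzS)
      exact reachable_induce_of_walk _ key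
  · -- u on Pyz
    have key : ∀ z ∈ (c.Pyz.takeUntil u h).reverse.support, z ∈ Sᶜ := by
      intro z hz hzS
      rw [Walk.support_reverse, List.mem_reverse] at hz
      exact c.d₁ z (hSmem z hzS) (c.Pyz.support_takeUntil_subset h hz)
    exact reachable_induce_of_walk _ key
  · -- u on Pyw
    have key : ∀ z ∈ (c.Pyw.takeUntil u h).reverse.support, z ∈ Sᶜ := by
      intro z hz hzS
      rw [Walk.support_reverse, List.mem_reverse] at hz
      have hzw : z = c.w := c.d₂ z (hSmem z hzS) (c.Pyw.support_takeUntil_subset h hz)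
      subst hzw
      by_cases huw : u = c.w
      · subst huw; exact hu hzS
      · exact end_not_mem_take c.Pyw_path h huw hz
    exact reachable_induce_of_walk _ key
  · -- u on Pzw
    have key : ∀ z ∈ ((c.Pzw.takeUntil u h).reverse.append c.Pyz.reverse).support,
        z ∈ Sᶜ := by
      intro z hz hzS
      rw [Walk.mem_support_append_iff] at hz
      rcases hz with hz | hz
      · rw [Walk.support_reverse, List.mem_reverse] at hz
        have hzw : z = c.w := c.d₃ z (hSmem z hzS) (c.Pzw.support_takeUntil_subset h hz)
        subst hzw
        by_cases huw : u = c.w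
        · subst huw; exact hu hzS
        · exact end_not_mem_take c.Pzw_path h huw hz
      · rw [Walk.support_reverse, List.mem_reverse] at hz
        exact c.d₁ z (hSmem z hzS) hz
    exact reachable_induce_of_walk _ key

lemma reach_all_int_yw (v : V) (hv : v ∈ c.Pyw.support) (hvy : v ≠ c.y) (hvw : v ≠ c.w)
    (S : Set V) (hvS : v ∈ S) (hSN : ∀ u ∈ S, u = v ∨ G.Adj v u) :
    ∃ (t : V) (htS : t ∈ Sᶜ), ∀ (u : V) (hu : u ∈ Sᶜ),
      (G.induce Sᶜ).Reachable ⟨u, hu⟩ ⟨t, htS⟩ := by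
  obtain ⟨p₁, p₂, A₂, B₂, hadj₁, hadj₂, hA₂p, hB₂p, hedge, hA₂sub, hB₂sub, hvA₂, hvB₂,
    hp₂A₂, hp₁B₂, haB₂, hbA₂, hcomp⟩ := interior_split c.Pyw c.Pyw_path hv hvy hvw
  have hSsub : ∀ s ∈ S, s = v ∨ s = p₁ ∨ s = p₂ := by
    intro s hs
    rcases hSN s hs with h | h
    · exact Or.inl h
    · rcases hedge s (c.nbr_yw hc hv hvy hvw h) with h1 | h1
      · exact Or.inr (Or.inl h1)
      · exact Or.inr (Or.inr h1)
  have hSmem : ∀ s ∈ S, s ∈ c.Pyw.support := by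
    intro s hs
    rcases hSsub s hs with rfl | rfl | rfl
    · exact hv
    · exact hA₂sub _ A₂.start_mem_support
    · exact hB₂sub _ B₂.start_mem_support
  have hxS : c.x ∈ Sᶜ := fun hx => c.x_nmem_yw (hSmem _ hx)
  refine ⟨c.x, hxS, ?_⟩
  intro u hu
  rcases hc.1 u with h | h | h | h
  · -- u on Pxw
    have key : ∀ z ∈ (c.Pxw.takeUntil u h).reverse.support, z ∈ Sᶜ := by
      intro z hz hzS
      rw [Walk.support_reverse, List.mem_reverse] at hz
      have hzw : z = c.w := c.d₂ z (c.Pxw.support_takeUntil_subset h hz) (hSmem z hzS)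
      subst hzw
      by_cases huw : u = c.w
      · subst huw; exact hu hzS
      · exact end_not_mem_take c.Pxw_path h huw hz
    exact reachable_induce_of_walk _ key
  · -- u on Pyz
    have key : ∀ z ∈ ((c.Pyz.dropUntil u h).append
        (Walk.cons c.adj_xz.symm Walk.nil)).support, z ∈ Sᶜ := by
      intro z hz hzS
      rw [Walk.mem_support_append_iff] at hz
      rcases hz with hz | hz
      · have hzy : z = c.y :=
          c.d₄ z (c.Pyz.support_dropUntil_subset h hz) (hSmem z hzS)
        subst hzy
        by_cases huy : u = c.y
        · subst huy; exact hu hzS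
        · exact start_not_mem_drop c.Pyz_path h huy hz
      · simp only [Walk.support_cons, Walk.support_nil, List.mem_cons] at hz
        rcases hz with rfl | hz
        · exact c.z_nmem_yw (hSmem _ hzS)
        · rcases hz with rfl | hz
          · exact hxS hzS
          · simp at hz
    exact reachable_induce_of_walk _ key
  · -- u on Pyw
    have hune : u ≠ v := fun h' => hu (h' ▸ hvS)
    rcases hcomp u h hune with hm | hm
    · -- y-side
      have key : ∀ z ∈ ((A₂.dropUntil u hm).append
          (Walk.cons c.adj_xy.symm Walk.nil)).support, z ∈ Sᶜ := by
        intro z hz hzS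
        rw [Walk.mem_support_append_iff] at hz
        rcases hz with hz | hz
        · have hzm : z ∈ A₂.support := A₂.support_dropUntil_subset hm hz
          rcases hSsub z hzS with rfl | rfl | rfl
          · exact hvA₂ hzm
          · by_cases hur : u = z
            · subst hur; exact hu hzS
            · exact start_not_mem_drop hA₂p hm hur hz
          · exact hp₂A₂ hzm
        · simp only [Walk.support_cons, Walk.support_nil, List.mem_cons] at hz
          rcases hz with rfl | hz
          · rcases hSsub _ hzS with h1 | h1 | h1
            · exact hvy h1.symm
            · subst h1
              exact hu ((loop_support hA₂p hm).symm ▸ hzS)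
            · exact haB₂ (h1.symm ▸ B₂.start_mem_support)
          · rcases hz with rfl | hz
            · exact hxS hzS
            · simp at hz
      exact reachable_induce_of_walk _ key
    · -- w-side
      have key : ∀ z ∈ ((B₂.dropUntil u hm).append c.Pxw.reverse).support, z ∈ Sᶜ := by
        intro z hz hzS
        rw [Walk.mem_support_append_iff] at hz
        rcases hz with hz | hz
        · have hzm : z ∈ B₂.support := B₂.support_dropUntil_subset hm hz
          rcases hSsub z hzS with rfl | rfl | rfl
          · exact hvB₂ hzm
          · exact hp₁B₂ hzm
          · by_cases hur : u = z
            · subst hur; exact hu hzS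
            · exact start_not_mem_drop hB₂p hm hur hz
        · rw [Walk.support_reverse, List.mem_reverse] at hz
          have hzw : z = c.w := c.d₂ z hz (hSmem z hzS)
          subst hzw
          rcases hSsub _ hzS with h1 | h1 | h1
          · exact hvw h1.symm
          · exact hbA₂ (h1.symm ▸ A₂.start_mem_support)
          · subst h1
            exact hu ((loop_support hB₂p hm).symm ▸ hzS)
      exact reachable_induce_of_walk _ key
  · -- u on Pzw
    have key : ∀ z ∈ ((c.Pzw.takeUntil u h).reverse.append
        (Walk.cons c.adj_xz.symm Walk.nil)).support, z ∈ Sᶜ := by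
      intro z hz hzS
      rw [Walk.mem_support_append_iff] at hz
      rcases hz with hz | hz
      · rw [Walk.support_reverse, List.mem_reverse] at hz
        have hzw : z = c.w :=
          c.d₆ z (hSmem z hzS) (c.Pzw.support_takeUntil_subset h hz)
        subst hzw
        by_cases huw : u = c.w
        · subst huw; exact hu hzS
        · exact end_not_mem_take c.Pzw_path h huw hz
      · simp only [Walk.support_cons, Walk.support_nil, List.mem_cons] at hz
        rcases hz with rfl | hz
        · exact c.z_nmem_yw (hSmem _ hzS)
        · rcases hz with rfl | hz
          · exact hxS hzS
          · simp at hz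
    exact reachable_induce_of_walk _ key

lemma reach_all_int_zw (v : V) (hv : v ∈ c.Pzw.support) (hvz : v ≠ c.z) (hvw : v ≠ c.w)
    (S : Set V) (hvS : v ∈ S) (hSN : ∀ u ∈ S, u = v ∨ G.Adj v u) :
    ∃ (t : V) (htS : t ∈ Sᶜ), ∀ (u : V) (hu : u ∈ Sᶜ),
      (G.induce Sᶜ).Reachable ⟨u, hu⟩ ⟨t, htS⟩ := by
  obtain ⟨p₁, p₂, A₂, B₂, hadj₁, hadj₂, hA₂p, hB₂p, hedge, hA₂sub, hB₂sub, hvA₂, hvB₂,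
    hp₂A₂, hp₁B₂, haB₂, hbA₂, hcomp⟩ := interior_split c.Pzw c.Pzw_path hv hvz hvw
  have hSsub : ∀ s ∈ S, s = v ∨ s = p₁ ∨ s = p₂ := by
    intro s hs
    rcases hSN s hs with h | h
    · exact Or.inl h
    · rcases hedge s (c.nbr_zw hc hv hvz hvw h) with h1 | h1
      · exact Or.inr (Or.inl h1)
      · exact Or.inr (Or.inr h1)
  have hSmem : ∀ s ∈ S, s ∈ c.Pzw.support := by
    intro s hs
    rcases hSsub s hs with rfl | rfl | rfl
    · exact hv
    · exact hA₂sub _ A₂.start_mem_support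
    · exact hB₂sub _ B₂.start_mem_support
  have hxS : c.x ∈ Sᶜ := fun hx => c.x_nmem_zw (hSmem _ hx)
  refine ⟨c.x, hxS, ?_⟩
  intro u hu
  rcases hc.1 u with h | h | h | h
  · -- u on Pxw
    have key : ∀ z ∈ (c.Pxw.takeUntil u h).reverse.support, z ∈ Sᶜ := by
      intro z hz hzS
      rw [Walk.support_reverse, List.mem_reverse] at hz
      have hzw : z = c.w := c.d₃ z (c.Pxw.support_takeUntil_subset h hz) (hSmem z hzS)
      subst hzw
      by_cases huw : u = c.w
      · subst huw; exact hu hzS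
      · exact end_not_mem_take c.Pxw_path h huw hz
    exact reachable_induce_of_walk _ key
  · -- u on Pyz
    have key : ∀ z ∈ ((c.Pyz.takeUntil u h).reverse.append
        (Walk.cons c.adj_xy.symm Walk.nil)).support, z ∈ Sᶜ := by
      intro z hz hzS
      rw [Walk.mem_support_append_iff] at hz
      rcases hz with hz | hz
      · rw [Walk.support_reverse, List.mem_reverse] at hz
        have hzz : z = c.z :=
          c.d₅ z (c.Pyz.support_takeUntil_subset h hz) (hSmem z hzS)
        subst hzz
        by_cases huz : u = c.z
        · subst huz; exact hu hzS
        · exact end_not_mem_take c.Pyz_path h huz hz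
      · simp only [Walk.support_cons, Walk.support_nil, List.mem_cons] at hz
        rcases hz with rfl | hz
        · exact c.y_nmem_zw (hSmem _ hzS)
        · rcases hz with rfl | hz
          · exact hxS hzS
          · simp at hz
    exact reachable_induce_of_walk _ key
  · -- u on Pyw
    have key : ∀ z ∈ ((c.Pyw.takeUntil u h).reverse.append
        (Walk.cons c.adj_xy.symm Walk.nil)).support, z ∈ Sᶜ := by
      intro z hz hzS
      rw [Walk.mem_support_append_iff] at hz
      rcases hz with hz | hz
      · rw [Walk.support_reverse, List.mem_reverse] at hz
        have hzw : z = c.w :=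
          c.d₆ z (c.Pyw.support_takeUntil_subset h hz) (hSmem z hzS)
        subst hzw
        by_cases huw : u = c.w
        · subst huw; exact hu hzS
        · exact end_not_mem_take c.Pyw_path h huw hz
      · simp only [Walk.support_cons, Walk.support_nil, List.mem_cons] at hz
        rcases hz with rfl | hz
        · exact c.y_nmem_zw (hSmem _ hzS)
        · rcases hz with rfl | hz
          · exact hxS hzS
          · simp at hz
    exact reachable_induce_of_walk _ key
  · -- u on Pzw
    have hune : u ≠ v := fun h' => hu (h' ▸ hvS)
    rcases hcomp u h hune with hm | hm
    · -- z-side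
      have key : ∀ z ∈ ((A₂.dropUntil u hm).append
          (Walk.cons c.adj_xz.symm Walk.nil)).support, z ∈ Sᶜ := by
        intro z hz hzS
        rw [Walk.mem_support_append_iff] at hz
        rcases hz with hz | hz
        · have hzm : z ∈ A₂.support := A₂.support_dropUntil_subset hm hz
          rcases hSsub z hzS with rfl | rfl | rfl
          · exact hvA₂ hzm
          · by_cases hur : u = z
            · subst hur; exact hu hzS
            · exact start_not_mem_drop hA₂p hm hur hz
          · exact hp₂A₂ hzm
        · simp only [Walk.support_cons, Walk.support_nil, List.mem_cons] at hz
          rcases hz with rfl | hz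
          · rcases hSsub _ hzS with h1 | h1 | h1
            · exact hvz h1.symm
            · subst h1
              exact hu ((loop_support hA₂p hm).symm ▸ hzS)
            · exact haB₂ (h1.symm ▸ B₂.start_mem_support)
          · rcases hz with rfl | hz
            · exact hxS hzS
            · simp at hz
      exact reachable_induce_of_walk _ key
    · -- w-side
      have key : ∀ z ∈ ((B₂.dropUntil u hm).append c.Pxw.reverse).support, z ∈ Sᶜ := by
        intro z hz hzS
        rw [Walk.mem_support_append_iff] at hz
        rcases hz with hz | hz
        · have hzm : z ∈ B₂.support := B₂.support_dropUntil_subset hm hz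
          rcases hSsub z hzS with rfl | rfl | rfl
          · exact hvB₂ hzm
          · exact hp₁B₂ hzm
          · by_cases hur : u = z
            · subst hur; exact hu hzS
            · exact start_not_mem_drop hB₂p hm hur hz
        · rw [Walk.support_reverse, List.mem_reverse] at hz
          have hzw : z = c.w := c.d₃ z hz (hSmem z hzS)
          subst hzw
          rcases hSsub _ hzS with h1 | h1 | h1
          · exact hvw h1.symm
          · exact hbA₂ (h1.symm ▸ A₂.start_mem_support)
          · subst h1
            exact hu ((loop_support hB₂p hm).symm ▸ hzS)
      exact reachable_induce_of_walk _ key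

lemma star_at_x : HasStarCutsetAt G c.x := by
  obtain ⟨r, hyr, Cyz, hCeq, hyC, hCp⟩ := cons_view c.Pyz c.Pyz_path c.ne_yz
  have hr_mem : r ∈ c.Pyz.support := by rw [hCeq]; simp
  have hr_y : r ≠ c.y := fun h' => hyC (h' ▸ Cyz.start_mem_support)
  have hr_z : r ≠ c.z := by
    intro h'
    subst h'
    have hn := Walk.isPath_iff_eq_nil.mp hCp
    rw [hn] at hCeq
    have hlen := congrArg Walk.length hCeq
    simp at hlen
    have h2 := c.Pyz_len
    omega
  have hr_x : r ≠ c.x := fun h' => c.x_nmem_yz (h' ▸ hr_mem)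
  refine ⟨{c.x, c.y, c.z}, by simp, ?_, ?_⟩
  · intro u hu
    simp only [Set.mem_insert_iff, Set.mem_singleton_iff] at hu
    rcases hu with rfl | rfl | rfl
    · exact Or.inl rfl
    · exact Or.inr c.adj_xy
    · exact Or.inr c.adj_xz
  · intro hpre
    have hrS : r ∈ ({c.x, c.y, c.z} : Set V)ᶜ := by
      simp only [Set.mem_compl_iff, Set.mem_insert_iff, Set.mem_singleton_iff]
      push_neg
      exact ⟨hr_x, hr_y, hr_z⟩
    have hwS : c.w ∈ ({c.x, c.y, c.z} : Set V)ᶜ := by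
      simp only [Set.mem_compl_iff, Set.mem_insert_iff, Set.mem_singleton_iff]
      push_neg
      exact ⟨Ne.symm c.ne_xw, Ne.symm c.ne_yw, Ne.symm c.ne_zw⟩
    obtain ⟨p⟩ := hpre ⟨r, hrS⟩ ⟨c.w, hwS⟩
    have claim : ∀ {a b : V} (q : G.Walk a b),
        (∀ z ∈ q.support, z ≠ c.y ∧ z ≠ c.z) →
        a ∈ c.Pyz.support → b ∈ c.Pyz.support := by
      intro a b q
      induction q with
      | nil => exact fun _ h => h
      | @cons a m b hadj q ih =>
        intro hS hA
        refine ih (fun z hz => hS z (by simp [hz])) ?_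
        have hne := hS a (by simp)
        exact c.Pyz.snd_mem_support_of_mem_edges (c.nbr_yz hc hA hne.1 hne.2 hadj)
    have hmap := claim (p.map (SimpleGraph.Embedding.induce _).toHom) ?_ hr_mem
    · exact c.w_nmem_yz hmap
    · intro z hz
      rw [Walk.support_map, List.mem_map] at hz
      obtain ⟨A', hA', rfl⟩ := hz
      have h2 := A'.2
      simp only [Set.mem_compl_iff, Set.mem_insert_iff, Set.mem_singleton_iff] at h2
      push_neg at h2
      exact ⟨h2.2.1, h2.2.2⟩

end Type4K4Core

end Proof

/-- in a Burling-admissible type-4 subdivision of `K₄`, the common endpoint `x`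
of the two non-subdivided edges is the unique center of a star cutset. -/
theorem type4K4_unique_starCutset_center (V : Type) (G : SimpleGraph V)
    (c : Type4K4Core G) (hc : c.Spanning) :
    HasStarCutsetAt G c.x ∧ ∀ v, HasStarCutsetAt G v → v = c.x := by
  classical
  constructor
  · exact c.star_at_x hc
  · intro v hv
    by_contra hvx
    obtain ⟨S, hvS, hSN, hdis⟩ := hv
    apply hdis
    have main : ∃ (t : V) (htS : t ∈ Sᶜ), ∀ (u : V) (hu : u ∈ Sᶜ),
        (G.induce Sᶜ).Reachable ⟨u, hu⟩ ⟨t, htS⟩ := by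
      rcases hc.1 v with h | h | h | h
      · by_cases h1 : v = c.w
        · subst h1; exact c.reach_all_w hc S hvS hSN
        · exact c.reach_all_int_xw hc v h hvx h1 S hvS hSN
      · by_cases h1 : v = c.y
        · subst h1; exact c.reach_all_y hc S hvS hSN
        · by_cases h2 : v = c.z
          · subst h2; exact c.reach_all_z hc S hvS hSN
          · exact c.reach_all_int_yz hc v h h1 h2 S hvS hSN
      · by_cases h1 : v = c.y
        · subst h1; exact c.reach_all_y hc S hvS hSN
        · by_cases h2 : v = c.w
          · subst h2; exact c.reach_all_w hc S hvS hSN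
          · exact c.reach_all_int_yw hc v h h1 h2 S hvS hSN
      · by_cases h1 : v = c.z
        · subst h1; exact c.reach_all_z hc S hvS hSN
        · by_cases h2 : v = c.w
          · subst h2; exact c.reach_all_w hc S hvS hSN
          · exact c.reach_all_int_zw hc v h h1 h2 S hvS hSN
    obtain ⟨t, htS, hr⟩ := main
    intro a b
    exact (hr a.1 a.2).trans (hr b.1 b.2).symm

end BurlingFormal
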